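/- arXiv:2007.12879 — 2 statements merged into one kernel-verified Lean document; each statement's English description precedes it below -/
import Mathlib

section
/- Fix ε > 0, m ≥ 0. For all x, t, t' ∈ εℤ with t > t' > 0: a1(x,t) = Σ_{x' ∈ εℤ} [a2(x',t')·a1(x−x'+ε, t−t'+ε) + a1(x',t')·a2(x'−x+ε, t−t'+ε)] and a2(x,t) = Σ_{x' ∈ εℤ} [a2(x',t')·a2(x−x'+ε, t−t'+ε) − a1(x',t')·a1(x'−x+ε, t−t'+ε)], where all functions are evaluated at mass m and lattice step ε. -/
open scoped BigOperators

noncomputable section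

/-- Endpoint `x`-coordinate of a checker path of `n` steps encoded by step directions:
`true` = step `(1,1)`, `false` = step `(-1,1)`. -/
def endpt {n : ℕ} (d : Fin n → Bool) : ℤ :=
  ∑ i, (if d i then (1 : ℤ) else -1)

/-- The number of turns of a checker path encoded by step directions. -/
def turns {n : ℕ} (d : Fin n → Bool) : ℕ :=
  ((Finset.range n).filter fun i =>
    ∃ h : i + 1 < n, d ⟨i, Nat.lt_of_succ_lt h⟩ ≠ d ⟨i + 1, h⟩).card

/-- Checker paths from `(0,0)` to `(x,n)` with the first step to `(1,1)`,
encoded by their step directions. -/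
def pathsTo (x : ℤ) (n : ℕ) : Finset (Fin n → Bool) :=
  Finset.univ.filter fun d => (∃ h : 0 < n, d ⟨0, h⟩ = true) ∧ endpt d = x

/-- Feynman checkers with mass `m` and lattice step `ε`: the value `a(εx, εt, m, ε)`,
where `x t : ℤ` are the coordinates in units of `ε`. -/
def am (x t : ℤ) (m ε : ℝ) : ℂ :=
  (1 + m ^ 2 * ε ^ 2 : ℂ) ^ ((1 - (t : ℂ)) / 2) * Complex.I *
    ∑ d ∈ pathsTo x t.toNat, (-Complex.I * (m * ε)) ^ turns d

/-- The basic model: `a(x,t)`. -/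
def a (x t : ℤ) : ℂ :=
  (2 : ℂ) ^ ((1 - (t : ℂ)) / 2) * Complex.I *
    ∑ d ∈ pathsTo x t.toNat, (-Complex.I) ^ turns d

/-- extend a path function to ℕ -/
def toF {n : ℕ} (d : Fin n → Bool) (i : ℕ) : Bool :=
  if h : i < n then d ⟨i, h⟩ else false

lemma turns_eq {n : ℕ} (d : Fin (n+1) → Bool) :
    turns d = ∑ i ∈ Finset.range n, if toF d i ≠ toF d (i+1) then 1 else 0 := by
  unfold turns
  rw [Finset.card_filter, Finset.sum_range_succ]
  have h0 : (if ∃ h : n + 1 < n + 1, d ⟨n, Nat.lt_of_succ_lt h⟩ ≠ d ⟨n+1, h⟩ then 1 else 0) = 0 := by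
    simp
  rw [h0, add_zero]
  apply Finset.sum_congr rfl
  intro i hi
  have hi' : i < n := Finset.mem_range.mp hi
  have h1 : i + 1 < n + 1 := Nat.succ_lt_succ hi'
  have h2 : i < n + 1 := by omega
  have hiff : (∃ h : i + 1 < n + 1, d ⟨i, Nat.lt_of_succ_lt h⟩ ≠ d ⟨i + 1, h⟩) ↔
      (toF d i ≠ toF d (i+1)) := by
    constructor
    · rintro ⟨h, hne⟩
      simpa [toF, h1, h2] using hne
    · intro hne
      refine ⟨h1, ?_⟩
      simpa [toF, h1, h2] using hne
  rw [if_congr hiff rfl rfl]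

lemma toF_snoc_lt {n : ℕ} (d : Fin (n+1) → Bool) (b : Bool) (i : ℕ) (h : i < n+1) :
    toF (Fin.snoc d b : Fin (n+2) → Bool) i = toF d i := by
  have h2 : i < n + 2 := Nat.lt_succ_of_lt h
  simp only [toF, dif_pos h, dif_pos h2]
  have : (⟨i, h2⟩ : Fin (n+2)) = Fin.castSucc ⟨i, h⟩ := rfl
  rw [this, Fin.snoc_castSucc]

lemma toF_snoc_last {n : ℕ} (d : Fin (n+1) → Bool) (b : Bool) :
    toF (Fin.snoc d b : Fin (n+2) → Bool) (n+1) = b := by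
  have h2 : n + 1 < n + 2 := Nat.lt_succ_self _
  simp only [toF, dif_pos h2]
  have : (⟨n+1, h2⟩ : Fin (n+2)) = Fin.last (n+1) := rfl
  rw [this, Fin.snoc_last]

lemma turns_snoc {n : ℕ} (d : Fin (n+1) → Bool) (b : Bool) :
    turns (Fin.snoc d b : Fin (n+2) → Bool) =
      turns d + (if d (Fin.last n) ≠ b then 1 else 0) := by
  rw [turns_eq, turns_eq, Finset.sum_range_succ]
  congr 1
  · apply Finset.sum_congr rfl
    intro i hi
    have hi' : i < n := Finset.mem_range.mp hi
    rw [toF_snoc_lt d b i (by omega), toF_snoc_lt d b (i+1) (by omega)]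
  · rw [toF_snoc_lt d b n (by omega), toF_snoc_last]
    have : toF d n = d (Fin.last n) := by
      simp only [toF, dif_pos (Nat.lt_succ_self n)]
      rfl
    rw [this]

lemma endpt_snoc {n : ℕ} (d : Fin n → Bool) (b : Bool) :
    endpt (Fin.snoc d b : Fin (n+1) → Bool) = endpt d + (if b then 1 else -1) := by
  unfold endpt
  rw [Fin.sum_univ_castSucc]
  simp

lemma turns_one (d : Fin 1 → Bool) : turns d = 0 := by
  rw [turns_eq]; simp

lemma last_iff_even {n : ℕ} (d : Fin (n+1) → Bool) (h0 : d 0 = true) :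
    d (Fin.last n) = true ↔ Even (turns d) := by
  induction n with
  | zero =>
      rw [turns_one]
      simpa using h0
  | succ n ih =>
      have hd : Fin.snoc (Fin.init d) (d (Fin.last (n+1))) = d := Fin.snoc_init_self d
      have h0' : Fin.init d 0 = true := by
        rw [Fin.init]
        convert h0 using 2
        rfl
      have hih := ih (Fin.init d) h0'
      rw [← hd, turns_snoc, Fin.snoc_last]
      rcases hb : d (Fin.last (n+1)) with _ | _ <;>
        rcases hl : Fin.init d (Fin.last n) with _ | _ <;>
        simp [hb, hl, Nat.even_add_one] at hih ⊢ <;> simp [hih]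

lemma abs_endpt_le {n : ℕ} (d : Fin n → Bool) : |endpt d| ≤ n := by
  unfold endpt
  calc |∑ i, (if d i then (1:ℤ) else -1)| ≤ ∑ i, |if d i then (1:ℤ) else -1| :=
        Finset.abs_sum_le_sum_abs _ _
    _ ≤ ∑ _i : Fin n, 1 := by
        apply Finset.sum_le_sum
        intro i _
        rcases hdi : d i <;> simp [hdi]
    _ = n := by simp

lemma pathsTo_eq_empty {x : ℤ} {n : ℕ} (h : (n : ℤ) < |x|) : pathsTo x n = ∅ := by
  rw [Finset.eq_empty_iff_forall_notMem]
  intro d hd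
  rw [pathsTo, Finset.mem_filter] at hd
  rcases hd with ⟨-, -, he⟩
  rw [← he] at h
  exact absurd (abs_endpt_le d) (not_le.mpr h)

lemma mem_pathsTo_succ {x : ℤ} {n : ℕ} {d : Fin (n+1) → Bool} :
    d ∈ pathsTo x (n+1) ↔ d 0 = true ∧ endpt d = x := by
  rw [pathsTo, Finset.mem_filter]
  constructor
  · rintro ⟨-, ⟨h, h1⟩, h2⟩
    exact ⟨h1, h2⟩
  · rintro ⟨h1, h2⟩
    exact ⟨Finset.mem_univ _, ⟨Nat.succ_pos n, h1⟩, h2⟩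

lemma snoc_injOn {n : ℕ} (b : Bool) (s : Finset (Fin (n+1) → Bool)) :
    Set.InjOn (fun e : Fin (n+1) → Bool => (Fin.snoc e b : Fin (n+2) → Bool)) s := by
  intro e1 _ e2 _ h
  have := congrArg Fin.init h
  simpa [Fin.init_snoc] using this

lemma pathsTo_decomp (x : ℤ) (n : ℕ) :
    pathsTo x (n+2) =
      ((pathsTo (x-1) (n+1)).image fun e => (Fin.snoc e true : Fin (n+2) → Bool)) ∪
      ((pathsTo (x+1) (n+1)).image fun e => (Fin.snoc e false : Fin (n+2) → Bool)) := by
  ext d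
  rw [Finset.mem_union, Finset.mem_image, Finset.mem_image, mem_pathsTo_succ]
  constructor
  · rintro ⟨h0, he⟩
    have hd : Fin.snoc (Fin.init d) (d (Fin.last (n+1))) = d := Fin.snoc_init_self d
    have h0' : Fin.init d 0 = true := by
      rw [Fin.init]; convert h0 using 2; rfl
    have hend : endpt d = endpt (Fin.init d) + (if d (Fin.last (n+1)) then 1 else -1) := by
      conv_lhs => rw [← hd]
      rw [endpt_snoc]
    rcases hb : d (Fin.last (n+1)) with _ | _
    · right
      refine ⟨Fin.init d, mem_pathsTo_succ.mpr ⟨h0', ?_⟩, by rw [← hb, hd]⟩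
      rw [hb] at hend; simp at hend; omega
    · left
      refine ⟨Fin.init d, mem_pathsTo_succ.mpr ⟨h0', ?_⟩, by rw [← hb, hd]⟩
      rw [hb] at hend; simp at hend; omega
  · rintro (⟨e, he, rfl⟩ | ⟨e, he, rfl⟩)
    · rcases mem_pathsTo_succ.mp he with ⟨h0, hend⟩
      constructor
      · have h00 : (0 : Fin (n+2)) = Fin.castSucc 0 := rfl
        rw [h00, Fin.snoc_castSucc]; exact h0
      · rw [endpt_snoc, hend]; simp
    · rcases mem_pathsTo_succ.mp he with ⟨h0, hend⟩
      constructor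
      · have h00 : (0 : Fin (n+2)) = Fin.castSucc 0 := rfl
        rw [h00, Fin.snoc_castSucc]; exact h0
      · rw [endpt_snoc, hend]; simp

lemma pathsTo_disj (x : ℤ) (n : ℕ) :
    Disjoint ((pathsTo (x-1) (n+1)).image fun e => (Fin.snoc e true : Fin (n+2) → Bool))
      ((pathsTo (x+1) (n+1)).image fun e => (Fin.snoc e false : Fin (n+2) → Bool)) := by
  rw [Finset.disjoint_left]
  rintro d hd1 hd2
  rcases Finset.mem_image.mp hd1 with ⟨e1, -, rfl⟩
  rcases Finset.mem_image.mp hd2 with ⟨e2, -, h⟩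
  have := congrArg (fun f => f (Fin.last (n+1))) h
  simp [Fin.snoc_last] at this

/-- The path sum. -/
def S (c : ℝ) (x : ℤ) (n : ℕ) : ℂ :=
  ∑ d ∈ pathsTo x n, (-Complex.I * (c : ℂ)) ^ turns d

lemma zsq (c : ℝ) : (-Complex.I * (c:ℂ))^2 = Complex.ofReal (-(c^2)) := by
  have h : (-Complex.I * (c:ℂ))^2 = (Complex.I * Complex.I) * (c:ℂ)^2 := by ring
  rw [h, Complex.I_mul_I, Complex.ofReal_neg, Complex.ofReal_pow]
  ring

lemma zpow_im_even (c : ℝ) {k : ℕ} (hk : Even k) : ((-Complex.I * (c:ℂ))^k).im = 0 := by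
  obtain ⟨j, rfl⟩ := hk
  rw [show j + j = 2 * j by ring, pow_mul, zsq, ← Complex.ofReal_pow]
  exact Complex.ofReal_im _

lemma zpow_re_odd (c : ℝ) {k : ℕ} (hk : ¬ Even k) : ((-Complex.I * (c:ℂ))^k).re = 0 := by
  obtain ⟨j, rfl⟩ := (Nat.not_even_iff_odd.mp hk)
  rw [pow_succ, pow_mul, zsq, ← Complex.ofReal_pow, Complex.mul_re, Complex.ofReal_im,
    Complex.ofReal_re]
  have h3 : (-Complex.I * (c:ℂ)).re = 0 := by simp
  rw [h3]
  ring

lemma key_true (c : ℝ) {n : ℕ} (d : Fin (n+1) → Bool) (h0 : d 0 = true) :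
    (-Complex.I * (c:ℂ)) ^ (turns d + if d (Fin.last n) ≠ true then 1 else 0) =
      Complex.ofReal ((((-Complex.I * (c:ℂ)) ^ turns d).re + c * (((-Complex.I * (c:ℂ)) ^ turns d).im))) := by
  by_cases hE : Even (turns d)
  · have hl : d (Fin.last n) = true := (last_iff_even d h0).mpr hE
    have him := zpow_im_even c hE
    rw [hl]
    simp only [ne_eq, not_true_eq_false, if_false, add_zero]
    set w := (-Complex.I * (c:ℂ)) ^ turns d with hw
    apply Complex.ext <;> (simp [him]; try ring)
  · have hl : d (Fin.last n) ≠ true := fun h => hE ((last_iff_even d h0).mp h)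
    have hre := zpow_re_odd c hE
    rw [if_pos hl, pow_succ]
    set w := (-Complex.I * (c:ℂ)) ^ turns d with hw
    apply Complex.ext <;> (simp [Complex.mul_re, Complex.mul_im, hre]; try ring)

lemma key_false (c : ℝ) {n : ℕ} (d : Fin (n+1) → Bool) (h0 : d 0 = true) :
    (-Complex.I * (c:ℂ)) ^ (turns d + if d (Fin.last n) ≠ false then 1 else 0) =
      Complex.I * Complex.ofReal ((((-Complex.I * (c:ℂ)) ^ turns d).im - c * (((-Complex.I * (c:ℂ)) ^ turns d).re))) := by
  by_cases hE : Even (turns d)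
  · have hl : d (Fin.last n) = true := (last_iff_even d h0).mpr hE
    have him := zpow_im_even c hE
    rw [hl]
    simp only [ne_eq, Bool.true_eq_false, not_false_eq_true, if_true, pow_succ]
    set w := (-Complex.I * (c:ℂ)) ^ turns d with hw
    apply Complex.ext <;> (simp [Complex.mul_re, Complex.mul_im, him]; try ring)
  · have hl : d (Fin.last n) = false := by
      rcases hl2 : d (Fin.last n) with _|_
      · rfl
      · exact absurd ((last_iff_even d h0).mp hl2) hE
    have hre := zpow_re_odd c hE
    rw [hl]
    simp only [ne_eq, not_false_eq_true, not_true_eq_false, if_false, add_zero]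
    set w := (-Complex.I * (c:ℂ)) ^ turns d with hw
    apply Complex.ext <;> (simp [Complex.mul_re, Complex.mul_im, hre]; try ring)

lemma mem_first {x : ℤ} {n : ℕ} {d : Fin (n+1) → Bool} (hd : d ∈ pathsTo x (n+1)) :
    d 0 = true := (mem_pathsTo_succ.mp hd).1

lemma Srec (c : ℝ) (n : ℕ) (x : ℤ) :
    S c x (n+2) = Complex.ofReal ((S c (x-1) (n+1)).re + c * (S c (x-1) (n+1)).im)
      + Complex.I * Complex.ofReal ((S c (x+1) (n+1)).im - c * (S c (x+1) (n+1)).re) := by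
  unfold S
  rw [pathsTo_decomp, Finset.sum_union (pathsTo_disj x n),
    Finset.sum_image (fun e he e' he' h => snoc_injOn true (pathsTo (x-1) (n+1)) he he' h),
    Finset.sum_image (fun e he e' he' h => snoc_injOn false (pathsTo (x+1) (n+1)) he he' h)]
  congr 1
  · calc ∑ e ∈ pathsTo (x-1) (n+1), (-Complex.I * (c:ℂ)) ^ turns (Fin.snoc e true : Fin (n+2) → Bool)
        = ∑ e ∈ pathsTo (x-1) (n+1),
            Complex.ofReal ((((-Complex.I * (c:ℂ)) ^ turns e).re + c * (((-Complex.I * (c:ℂ)) ^ turns e).im))) := by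
          apply Finset.sum_congr rfl
          intro e he
          rw [turns_snoc, key_true c e (mem_first he)]
      _ = _ := by
          rw [← Complex.ofReal_sum, Finset.sum_add_distrib, ← Finset.mul_sum,
            ← Complex.re_sum, ← Complex.im_sum]
  · calc ∑ e ∈ pathsTo (x+1) (n+1), (-Complex.I * (c:ℂ)) ^ turns (Fin.snoc e false : Fin (n+2) → Bool)
        = ∑ e ∈ pathsTo (x+1) (n+1),
            Complex.I * Complex.ofReal ((((-Complex.I * (c:ℂ)) ^ turns e).im - c * (((-Complex.I * (c:ℂ)) ^ turns e).re))) := by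
          apply Finset.sum_congr rfl
          intro e he
          rw [turns_snoc, key_false c e (mem_first he)]
      _ = _ := by
          rw [← Finset.mul_sum, ← Complex.ofReal_sum, Finset.sum_sub_distrib, ← Finset.mul_sum,
            ← Complex.re_sum, ← Complex.im_sum]

lemma S_vanish (c : ℝ) {x : ℤ} {n : ℕ} (h : (n : ℤ) < |x|) : S c x n = 0 := by
  unfold S
  rw [pathsTo_eq_empty h, Finset.sum_empty]

lemma endpt_one (d : Fin 1 → Bool) : endpt d = if d 0 then 1 else -1 := by
  unfold endpt
  exact Fin.sum_univ_one _

lemma S_one (c : ℝ) (x : ℤ) : S c x 1 = if x = 1 then 1 else 0 := by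
  by_cases hx : x = 1
  · subst hx
    rw [if_pos rfl]
    unfold S
    have hp : pathsTo 1 1 = {fun _ => true} := by
      ext d
      rw [mem_pathsTo_succ, Finset.mem_singleton]
      constructor
      · rintro ⟨h0, -⟩
        funext i
        have : i = 0 := Subsingleton.elim i 0
        rw [this, h0]
      · rintro rfl
        exact ⟨rfl, by rw [endpt_one]; simp⟩
    rw [hp, Finset.sum_singleton, turns_one, pow_zero]
  · rw [if_neg hx]
    unfold S
    have hp : pathsTo x 1 = ∅ := by
      rw [Finset.eq_empty_iff_forall_notMem]
      intro d hd
      rcases mem_pathsTo_succ.mp hd with ⟨h0, he⟩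
      rw [endpt_one, h0, if_pos rfl] at he
      exact hx he.symm
    rw [hp, Finset.sum_empty]

lemma S_two (c : ℝ) (y : ℤ) :
    S c y 2 = if y = 2 then 1 else if y = 0 then -Complex.I * (c:ℂ) else 0 := by
  rw [show (2:ℕ) = 0 + 2 from rfl, Srec c 0 y, S_one, S_one]
  by_cases h2 : y = 2
  · subst h2
    norm_num
  · by_cases h0 : y = 0
    · subst h0
      norm_num
    · have hy1 : y - 1 ≠ 1 := by omega
      have hy2 : y + 1 ≠ 1 := by omega
      rw [if_neg hy1, if_neg hy2, if_neg h2, if_neg h0]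
      simp

lemma Srec_re (c : ℝ) (n : ℕ) (x : ℤ) :
    (S c x (n+1+1)).re = (S c (x-1) (n+1)).re + c * (S c (x-1) (n+1)).im := by
  rw [show n+1+1 = n+2 from rfl, Srec]
  simp

lemma Srec_im (c : ℝ) (n : ℕ) (x : ℤ) :
    (S c x (n+1+1)).im = (S c (x+1) (n+1)).im - c * (S c (x+1) (n+1)).re := by
  rw [show n+1+1 = n+2 from rfl, Srec]
  simp

lemma S_two_re (c : ℝ) (y : ℤ) : (S c y 2).re = if y = 2 then 1 else 0 := by
  rw [S_two]
  split_ifs <;> simp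

lemma S_two_im (c : ℝ) (y : ℤ) : (S c y 2).im = if y = 0 then -c else 0 := by
  rw [S_two]
  split_ifs <;> first | (exfalso; omega) | simp

lemma notmem_vanish (c : ℝ) (k : ℕ) {y : ℤ} (hy : y ∉ Finset.Icc (-(k+1:ℤ)) (k+1)) :
    S c y (k+1) = 0 := by
  simp only [Finset.mem_Icc, not_and_or, not_le] at hy
  apply S_vanish
  have : ((k:ℤ)+1) < |y| := by rcases abs_cases y with ⟨h1,h2⟩|⟨h1,h2⟩ <;> omega
  push_cast
  exact this

lemma core (c : ℝ) (k : ℕ) :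
    ∀ j : ℕ, 1 ≤ j → ∀ x : ℤ,
      ((S c x (k+1+j)).im = ∑ x' ∈ Finset.Icc (-(k+1:ℤ)) (k+1),
          ((S c x' (k+1)).re * (S c (x - x' + 1) (j+1)).im
            + (S c x' (k+1)).im * (S c (x' - x + 1) (j+1)).re))
      ∧
      ((S c x (k+1+j)).re = ∑ x' ∈ Finset.Icc (-(k+1:ℤ)) (k+1),
          ((S c x' (k+1)).re * (S c (x - x' + 1) (j+1)).re
            - (S c x' (k+1)).im * (S c (x' - x + 1) (j+1)).im)) := by
  refine Nat.le_induction ?_ ?_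
  · -- base case j = 1
    intro x
    constructor
    · -- imaginary part
      have h0 : ∀ b ∈ Finset.Icc (-(k+1:ℤ)) (k+1), b ≠ x + 1 →
          (S c b (k+1)).re * (S c (x - b + 1) (1+1)).im
            + (S c b (k+1)).im * (S c (b - x + 1) (1+1)).re = 0 := by
        intro b _ hne
        rw [show (1:ℕ)+1 = 2 from rfl, S_two_im, S_two_re,
          if_neg (by omega : ¬ x - b + 1 = 0), if_neg (by omega : ¬ b - x + 1 = 2)]
        ring
      have h1 : x + 1 ∉ Finset.Icc (-(k+1:ℤ)) (k+1) →
          (S c (x+1) (k+1)).re * (S c (x - (x+1) + 1) (1+1)).im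
            + (S c (x+1) (k+1)).im * (S c ((x+1) - x + 1) (1+1)).re = 0 := by
        intro hx
        rw [notmem_vanish c k hx]
        simp
      rw [Finset.sum_eq_single (x+1) h0 h1, show (1:ℕ)+1 = 2 from rfl,
        show k+1+1 = k+1+1 from rfl, Srec_im c k x, S_two_im, S_two_re,
        if_pos (by ring : x - (x+1) + 1 = 0), if_pos (by ring : (x+1) - x + 1 = 2)]
      ring
    · -- real part
      have h0 : ∀ b ∈ Finset.Icc (-(k+1:ℤ)) (k+1), b ≠ x - 1 →
          (S c b (k+1)).re * (S c (x - b + 1) (1+1)).re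
            - (S c b (k+1)).im * (S c (b - x + 1) (1+1)).im = 0 := by
        intro b _ hne
        rw [show (1:ℕ)+1 = 2 from rfl, S_two_im, S_two_re,
          if_neg (by omega : ¬ x - b + 1 = 2), if_neg (by omega : ¬ b - x + 1 = 0)]
        ring
      have h1 : x - 1 ∉ Finset.Icc (-(k+1:ℤ)) (k+1) →
          (S c (x-1) (k+1)).re * (S c (x - (x-1) + 1) (1+1)).re
            - (S c (x-1) (k+1)).im * (S c ((x-1) - x + 1) (1+1)).im = 0 := by
        intro hx
        rw [notmem_vanish c k hx]
        simp
      rw [Finset.sum_eq_single (x-1) h0 h1, show (1:ℕ)+1 = 2 from rfl,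
        Srec_re c k x, S_two_im, S_two_re,
        if_pos (by ring : x - (x-1) + 1 = 2), if_pos (by ring : (x-1) - x + 1 = 0)]
      ring
  · -- inductive step
    intro j hj ih x
    constructor
    · -- imaginary part
      have e1 : k+1+(j+1) = (k+1+j)+1 := by omega
      rw [e1, show (k+1+j)+1 = (k+j)+1+1 from by omega, Srec_im c (k+j) x,
        show (k+j)+1 = k+1+j from by omega,
        (ih (x+1)).1, (ih (x+1)).2, Finset.mul_sum, ← Finset.sum_sub_distrib]
      apply Finset.sum_congr rfl
      intro x' _
      rw [Srec_im c j (x - x' + 1), Srec_re c j (x' - x + 1),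
        show x + 1 - x' + 1 = x - x' + 1 + 1 from by ring,
        show x' - (x + 1) + 1 = x' - x + 1 - 1 from by ring]
      ring
    · -- real part
      have e1 : k+1+(j+1) = (k+1+j)+1 := by omega
      rw [e1, show (k+1+j)+1 = (k+j)+1+1 from by omega, Srec_re c (k+j) x,
        show (k+j)+1 = k+1+j from by omega,
        (ih (x-1)).1, (ih (x-1)).2, Finset.mul_sum, ← Finset.sum_add_distrib]
      apply Finset.sum_congr rfl
      intro x' _
      rw [Srec_re c j (x - x' + 1), Srec_im c j (x' - x + 1),
        show x - 1 - x' + 1 = x - x' + 1 - 1 from by ring,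
        show x' - (x - 1) + 1 = x' - x + 1 + 1 from by ring]
      ring

/-- The real normalization factor. -/
def Rnorm (m ε : ℝ) (t : ℤ) : ℝ := (1 + m^2*ε^2) ^ ((1 - (t:ℝ))/2)

lemma Rnorm_mul (m ε : ℝ) (t t' : ℤ) :
    Rnorm m ε t' * Rnorm m ε (t - t' + 1) = Rnorm m ε t := by
  unfold Rnorm
  rw [← Real.rpow_add (by positivity)]
  congr 1
  push_cast
  ring

lemma am_eq (m ε : ℝ) (x t : ℤ) :
    am x t m ε = Complex.ofReal (Rnorm m ε t) * Complex.I * S (m*ε) x t.toNat := by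
  unfold am S Rnorm
  rw [show (1 + (m:ℂ)^2*(ε:ℂ)^2) = ((1 + m^2*ε^2 : ℝ) : ℂ) from by push_cast; ring,
    show ((1 - (t:ℂ))/2) = (((1-(t:ℝ))/2 : ℝ) : ℂ) from by push_cast; ring,
    ← Complex.ofReal_cpow (by positivity : (0:ℝ) ≤ 1 + m^2*ε^2)]
  congr 1
  apply Finset.sum_congr rfl
  intro d _
  norm_cast

lemma am_re (m ε : ℝ) (x t : ℤ) :
    (am x t m ε).re = -(Rnorm m ε t) * (S (m*ε) x t.toNat).im := by
  rw [am_eq]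
  simp [Complex.mul_re, Complex.mul_im]
  try ring

lemma am_im (m ε : ℝ) (x t : ℤ) :
    (am x t m ε).im = (Rnorm m ε t) * (S (m*ε) x t.toNat).re := by
  rw [am_eq]
  simp [Complex.mul_re, Complex.mul_im]
  try ring

/-- Huygens' principle for Feynman checkers with mass m and lattice step ε. -/
theorem huygens_principle (m ε : ℝ) (hε : 0 < ε) (hm : 0 ≤ m)
    (x t t' : ℤ) (h1 : t' < t) (h2 : 0 < t') :
    (am x t m ε).re = ∑' x' : ℤ,
      ((am x' t' m ε).im * (am (x - x' + 1) (t - t' + 1) m ε).re +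
       (am x' t' m ε).re * (am (x' - x + 1) (t - t' + 1) m ε).im) ∧
    (am x t m ε).im = ∑' x' : ℤ,
      ((am x' t' m ε).im * (am (x - x' + 1) (t - t' + 1) m ε).im -
       (am x' t' m ε).re * (am (x' - x + 1) (t - t' + 1) m ε).re) := by
  obtain ⟨k, ht'⟩ : ∃ k : ℕ, t'.toNat = k + 1 := ⟨t'.toNat - 1, by omega⟩
  obtain ⟨j, hj, hN, hΔ⟩ : ∃ j : ℕ, 1 ≤ j ∧ t.toNat = k + 1 + j ∧ (t - t' + 1).toNat = j + 1 :=
    ⟨(t - t').toNat, by omega, by omega, by omega⟩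
  have hR : Rnorm m ε t' * Rnorm m ε (t - t' + 1) = Rnorm m ε t := Rnorm_mul m ε t t'
  have hcore := core (m*ε) k j hj x
  have hsupp1 : ∀ b : ℤ, b ∉ Finset.Icc (-(k+1:ℤ)) (k+1) →
      ((am b t' m ε).im * (am (x - b + 1) (t - t' + 1) m ε).re +
       (am b t' m ε).re * (am (b - x + 1) (t - t' + 1) m ε).im) = 0 := by
    intro b hb
    have hz := notmem_vanish (m*ε) k hb
    simp [am_re, am_im, ht', hz]
  have hsupp2 : ∀ b : ℤ, b ∉ Finset.Icc (-(k+1:ℤ)) (k+1) →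
      ((am b t' m ε).im * (am (x - b + 1) (t - t' + 1) m ε).im -
       (am b t' m ε).re * (am (b - x + 1) (t - t' + 1) m ε).re) = 0 := by
    intro b hb
    have hz := notmem_vanish (m*ε) k hb
    simp [am_re, am_im, ht', hz]
  constructor
  · rw [tsum_eq_sum hsupp1]
    simp only [am_re, am_im, ht', hN, hΔ]
    rw [hcore.1, Finset.mul_sum]
    apply Finset.sum_congr rfl
    intro b _
    rw [← hR]
    ring
  · rw [tsum_eq_sum hsupp2]
    simp only [am_re, am_im, ht', hN, hΔ]
    rw [hcore.2, Finset.mul_sum]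
    apply Finset.sum_congr rfl
    intro b _
    rw [← hR]
    ring
end
end

section
/- For each (x,t) ∈ εℤ² with t > 0: P(x,t,0,ε) = 1 if x = t and P(x,t,0,ε) = 0 otherwise. Moreover, lim_{m→∞} P(x,t,m,ε) = 1 if (x = 0 or x = ε) and (x+t)/ε is even, and the limit is 0 otherwise. -/
open scoped BigOperators

noncomputable section

def alt (n : ℕ) : Fin n → Bool := fun i => decide (i.val % 2 = 0)

lemma turns_le {n : ℕ} (d : Fin n → Bool) : turns d ≤ n - 1 := by
  unfold turns
  calc ((Finset.range n).filter fun i =>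
      ∃ h : i + 1 < n, d ⟨i, Nat.lt_of_succ_lt h⟩ ≠ d ⟨i + 1, h⟩).card
      ≤ (Finset.range (n-1)).card := by
        apply Finset.card_le_card
        intro i hi
        simp only [Finset.mem_filter, Finset.mem_range] at hi ⊢
        obtain ⟨-, h, -⟩ := hi
        omega
    _ = n - 1 := Finset.card_range _

lemma turns_eq_zero_iff {n : ℕ} (d : Fin n → Bool) :
    turns d = 0 ↔ ∀ i (h : i + 1 < n), d ⟨i, Nat.lt_of_succ_lt h⟩ = d ⟨i + 1, h⟩ := by
  unfold turns
  rw [Finset.card_eq_zero, Finset.filter_eq_empty_iff]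
  constructor
  · intro H i h
    have := H (Finset.mem_range.mpr (Nat.lt_of_succ_lt h))
    push_neg at this
    exact this h
  · intro H i hi
    push_neg
    intro h
    exact H i h

lemma const_of_turns_zero {n : ℕ} (d : Fin n → Bool) (hn : 0 < n)
    (h0 : d ⟨0, hn⟩ = true) (ht : turns d = 0) : ∀ i : Fin n, d i = true := by
  rw [turns_eq_zero_iff] at ht
  intro i
  obtain ⟨i, hi⟩ := i
  induction i with
  | zero => exact h0
  | succ k ih => rw [← ht k hi]; exact ih (Nat.lt_of_succ_lt hi)

lemma endpt_const_true (n : ℕ) : endpt (fun _ : Fin n => true) = n := by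
  simp [endpt]

lemma eq_const_of_endpt_eq {n : ℕ} (d : Fin n → Bool) (h : endpt d = n) :
    ∀ i, d i = true := by
  have hsum : ∑ i : Fin n, ((1:ℤ) - (if d i then 1 else -1)) = 0 := by
    rw [Finset.sum_sub_distrib]
    simp only [endpt] at h
    simp [h]
  have hnn : ∀ i ∈ Finset.univ, (0:ℤ) ≤ 1 - (if d i then 1 else -1) := by
    intro i _
    by_cases hd : d i <;> simp [hd]
  have := (Finset.sum_eq_zero_iff_of_nonneg hnn).mp hsum
  intro i
  have hi := this i (Finset.mem_univ i)
  by_contra hcon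
  simp [hcon] at hi
lemma turns_filter_eq {n : ℕ} (d : Fin n → Bool) (h : turns d = n - 1) :
    ∀ i (hi : i + 1 < n), d ⟨i, Nat.lt_of_succ_lt hi⟩ ≠ d ⟨i + 1, hi⟩ := by
  set s := ((Finset.range n).filter fun i =>
    ∃ h : i + 1 < n, d ⟨i, Nat.lt_of_succ_lt h⟩ ≠ d ⟨i + 1, h⟩) with hs
  have hsub : s ⊆ Finset.range (n - 1) := by
    intro i hi
    simp only [hs, Finset.mem_filter, Finset.mem_range] at hi ⊢
    obtain ⟨-, h', -⟩ := hi
    omega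
  have hcard : (Finset.range (n-1)).card ≤ s.card := by
    rw [Finset.card_range]
    exact h.ge
  have heq : s = Finset.range (n - 1) := Finset.eq_of_subset_of_card_le hsub hcard
  intro i hi
  have : i ∈ s := by
    rw [heq, Finset.mem_range]; omega
  simp only [hs, Finset.mem_filter] at this
  obtain ⟨-, h', hne⟩ := this
  exact hne

lemma alt_succ (k : ℕ) : decide ((k+1) % 2 = 0) = !decide (k % 2 = 0) := by
  rcases Nat.mod_two_eq_zero_or_one k with h | h <;> simp [Nat.add_mod, h]

lemma eq_alt_of_turns_max {n : ℕ} (d : Fin n → Bool) (hn : 0 < n)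
    (h0 : d ⟨0, hn⟩ = true) (h : turns d = n - 1) : d = alt n := by
  have key := turns_filter_eq d h
  funext i
  obtain ⟨i, hi⟩ := i
  induction i with
  | zero => simp [alt, h0]
  | succ k ih =>
    have hk : k + 1 < n := hi
    have hne := key k hk
    have hdk : d ⟨k, Nat.lt_of_succ_lt hk⟩ = alt n ⟨k, Nat.lt_of_succ_lt hk⟩ :=
      ih (Nat.lt_of_succ_lt hk)
    have : d ⟨k+1, hk⟩ = !(d ⟨k, Nat.lt_of_succ_lt hk⟩) := by
      cases hdk' : d ⟨k, Nat.lt_of_succ_lt hk⟩ <;>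
        cases hdk'' : d ⟨k+1, hk⟩ <;> simp_all
    rw [this, hdk]
    show _ = alt n ⟨k+1, hk⟩
    simp only [alt]
    rw [alt_succ k]

lemma alt_zero {n : ℕ} (hn : 0 < n) : alt n ⟨0, hn⟩ = true := by simp [alt]

lemma turns_alt (n : ℕ) : turns (alt n) = n - 1 := by
  unfold turns
  have : ((Finset.range n).filter fun i =>
      ∃ h : i + 1 < n, alt n ⟨i, Nat.lt_of_succ_lt h⟩ ≠ alt n ⟨i + 1, h⟩)
      = Finset.range (n - 1) := by
    ext i
    simp only [Finset.mem_filter, Finset.mem_range]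
    constructor
    · rintro ⟨-, h, -⟩; omega
    · intro hi
      refine ⟨by omega, by omega, ?_⟩
      simp only [alt, alt_succ i]
      cases h : decide (i % 2 = 0) <;> simp
  rw [this, Finset.card_range]

lemma endpt_alt (n : ℕ) : endpt (alt n) = if n % 2 = 0 then 0 else 1 := by
  induction n with
  | zero => simp [endpt]
  | succ m ih =>
    have : endpt (alt (m+1)) = endpt (alt m) + (if m % 2 = 0 then 1 else -1) := by
      unfold endpt
      rw [Fin.sum_univ_castSucc]
      congr 1
      simp [alt]
    rw [this, ih]
    rcases Nat.mod_two_eq_zero_or_one m with h | h <;> simp [h, Nat.add_mod]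

open Filter in
lemma tendsto_ratio : Tendsto (fun u : ℝ => u^2 / (1 + u^2)) atTop (nhds 1) := by
  have h : ∀ u : ℝ, u^2 / (1 + u^2) = 1 - 1 / (1 + u^2) := by
    intro u
    have : (1 : ℝ) + u^2 ≠ 0 := by positivity
    field_simp
    ring
  simp only [h]
  have h2 : Tendsto (fun u : ℝ => 1 / (1 + u^2)) atTop (nhds 0) := by
    apply Tendsto.div_atTop tendsto_const_nhds
    exact tendsto_atTop_add_const_left _ _ (tendsto_pow_atTop (two_ne_zero))
  simpa using tendsto_const_nhds.sub h2

open Filter in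
lemma tendsto_ratio_pow (k : ℕ) :
    Tendsto (fun u : ℝ => u^(2*k) / (1 + u^2)^k) atTop (nhds 1) := by
  have := tendsto_ratio.pow k
  rw [one_pow] at this
  apply this.congr'
  filter_upwards [eventually_gt_atTop (0:ℝ)] with u hu
  rw [div_pow, ← pow_mul, Nat.mul_comm]


open Filter in
lemma tendsto_small (k j : ℕ) (hj : 1 ≤ j) (hjk : j ≤ 2*k) :
    Tendsto (fun u : ℝ => u^(2*k - j) / (1 + u^2)^k) atTop (nhds 0) := by
  have h1 : Tendsto (fun u : ℝ => (u^(2*k) / (1 + u^2)^k) * (1 / u^j)) atTop (nhds 0) := by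
    have h2 : Tendsto (fun u : ℝ => 1 / u^j) atTop (nhds 0) :=
      Tendsto.div_atTop tendsto_const_nhds (tendsto_pow_atTop (by omega))
    simpa using (tendsto_ratio_pow k).mul h2
  apply h1.congr'
  filter_upwards [eventually_gt_atTop (0:ℝ)] with u hu
  have hu0 : u ≠ 0 := ne_of_gt hu
  have he : u^(2*k - j) * u^j = u^(2*k) := by rw [← pow_add]; congr 1; omega
  have hd : ((1:ℝ) + u^2)^k ≠ 0 := by positivity
  field_simp
  rw [← he]
  ring

lemma P1_eq (x : ℤ) (n : ℕ) (hn : 0 < n) :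
    (pathsTo x n).filter (fun d => turns d = n - 1) =
      if x = endpt (alt n) then {alt n} else ∅ := by
  ext d
  simp only [Finset.mem_filter, pathsTo, Finset.mem_univ, true_and]
  constructor
  · rintro ⟨⟨⟨h', h0⟩, hend⟩, hturn⟩
    have hd : d = alt n := eq_alt_of_turns_max d hn h0 hturn
    subst hd
    rw [if_pos hend.symm]
    simp
  · intro hd
    by_cases hx : x = endpt (alt n)
    · rw [if_pos hx, Finset.mem_singleton] at hd
      subst hd
      exact ⟨⟨⟨hn, alt_zero hn⟩, hx.symm⟩, turns_alt n⟩
    · rw [if_neg hx] at hd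
      simp at hd

lemma sum_zero_pow (x : ℤ) (n : ℕ) (hn : 0 < n) :
    (∑ d ∈ pathsTo x n, (0:ℂ) ^ turns d) = if x = (n:ℤ) then 1 else 0 := by
  by_cases hx : x = (n:ℤ)
  · rw [if_pos hx]
    have hP : pathsTo x n = {fun _ => true} := by
      ext d
      simp only [pathsTo, Finset.mem_filter, Finset.mem_univ, true_and,
        Finset.mem_singleton]
      constructor
      · rintro ⟨⟨h', h0⟩, hend⟩
        funext i
        exact eq_const_of_endpt_eq d (hend.trans (hx.trans rfl)) i
      · rintro rfl
        exact ⟨⟨hn, rfl⟩, (endpt_const_true n).trans hx.symm⟩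
    rw [hP, Finset.sum_singleton]
    have : turns (fun _ : Fin n => true) = 0 :=
      (turns_eq_zero_iff _).mpr (fun i h => rfl)
    rw [this, pow_zero]
  · rw [if_neg hx]
    apply Finset.sum_eq_zero
    intro d hd
    simp only [pathsTo, Finset.mem_filter, Finset.mem_univ, true_and] at hd
    obtain ⟨⟨h', h0⟩, hend⟩ := hd
    have hturn : turns d ≠ 0 := by
      intro hz
      have := const_of_turns_zero d hn h0 hz
      have : d = fun _ => true := funext this
      rw [this, endpt_const_true] at hend
      exact hx hend.symm
    exact zero_pow hturn

lemma abs_am_sq (x t : ℤ) (m ε : ℝ) (ht : 0 < t) :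
    ‖am x t m ε‖ ^ 2 =
      (‖∑ d ∈ pathsTo x t.toNat, (-Complex.I * ((m:ℂ) * (ε:ℂ))) ^ turns d‖)^2
        / (1 + (m*ε)^2)^(t.toNat - 1) := by
  have hr0 : (0:ℝ) < 1 + m^2 * ε^2 := by positivity
  have hbase : (1 + (m:ℂ)^2 * (ε:ℂ)^2) = (((1 + m^2 * ε^2 : ℝ)):ℂ) := by push_cast; ring
  have hexp : ((1 - (t:ℂ))/2) = ((((1 - (t:ℝ))/2):ℝ):ℂ) := by push_cast; ring
  unfold am
  rw [hbase, hexp, norm_mul, norm_mul, Complex.norm_I, mul_one,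
    Complex.norm_cpow_eq_rpow_re_of_pos hr0, Complex.ofReal_re]
  rw [mul_pow]
  have h2 : ((1 + m^2*ε^2:ℝ) ^ ((1 - (t:ℝ))/2))^2 = (1 + m^2*ε^2:ℝ) ^ ((1 - (t:ℝ))) := by
    rw [← Real.rpow_natCast ((1 + m^2*ε^2:ℝ) ^ ((1 - (t:ℝ))/2)) 2, ← Real.rpow_mul hr0.le]
    norm_num
  rw [h2]
  have h3 : (1 - (t:ℝ)) = -((t.toNat - 1 : ℕ) : ℝ) := by
    have h4 : ((t.toNat : ℤ)) = t := Int.toNat_of_nonneg ht.le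
    have h5 : (1:ℕ) ≤ t.toNat := by omega
    have h6 : ((t.toNat - 1 : ℕ) : ℝ) = (t:ℝ) - 1 := by
      have h4' : ((t.toNat : ℝ)) = (t : ℝ) := by exact_mod_cast congrArg (fun z : ℤ => (z:ℝ)) h4
      push_cast [h5]
      rw [h4']
    rw [h6]
    ring
  rw [h3, Real.rpow_neg hr0.le, Real.rpow_natCast]
  have h7 : (1 + m^2*ε^2:ℝ) = 1 + (m*ε)^2 := by ring
  rw [h7, div_eq_mul_inv, mul_comm]


open Filter in
/-- Massless and heavy particles. -/
theorem massless_and_heavy (ε : ℝ) (hε : 0 < ε) (x t : ℤ) (ht : 0 < t) :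
    (‖am x t 0 ε‖ ^ 2 = if x = t then 1 else 0) ∧
    Filter.Tendsto (fun m : ℝ => ‖am x t m ε‖ ^ 2) Filter.atTop
      (nhds (if (x = 0 ∨ x = 1) ∧ Even (x + t) then 1 else 0)) := by
  have hnt : ((t.toNat : ℤ)) = t := Int.toNat_of_nonneg ht.le
  have hn1 : 0 < t.toNat := by omega
  set n := t.toNat with hn
  constructor
  · -- massless part
    rw [abs_am_sq x t 0 ε ht]
    simp only [Complex.ofReal_zero, zero_mul, mul_zero]
    rw [show (t.toNat : ℕ) = n from rfl, sum_zero_pow x n hn1, hnt]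
    by_cases hx : x = t <;> simp [hx]
  · -- heavy part
    set c : ℝ := if x = endpt (alt n) then 1 else 0 with hc
    have hcc : c^2 = c := by rw [hc]; split <;> norm_num
    have hcnn : 0 ≤ c := by rw [hc]; split <;> norm_num
    have hcond : (((x = 0 ∨ x = 1) ∧ Even (x + t)) ↔ x = endpt (alt n)) := by
      rw [endpt_alt]
      rw [Int.even_iff]
      rcases Nat.mod_two_eq_zero_or_one n with h | h
      · rw [if_pos h]
        constructor
        · rintro ⟨hx01, hev⟩; omega
        · rintro rfl; omega
      · rw [if_neg (by omega : ¬ n % 2 = 0)]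
        constructor
        · rintro ⟨hx01, hev⟩; omega
        · rintro rfl; omega
    have htarget : (if ((x = 0 ∨ x = 1) ∧ Even (x + t)) then (1:ℝ) else 0) = c := by
      rw [hc]; exact if_congr hcond rfl rfl
    rw [htarget]
    set F : ℝ → ℝ := fun u =>
      (‖∑ d ∈ pathsTo x n, (-Complex.I * (u:ℂ)) ^ turns d‖)^2
        / (1 + u^2)^(n-1) with hFdef
    have hF : ∀ m : ℝ, ‖am x t m ε‖^2 = F (m * ε) := by
      intro m
      rw [abs_am_sq x t m ε ht, hFdef]
      simp only [Complex.ofReal_mul]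
      rfl
    suffices hFt : Tendsto F atTop (nhds c) by
      have hcomp : Tendsto (fun m : ℝ => m * ε) atTop atTop :=
        Tendsto.atTop_mul_const hε tendsto_id
      have := hFt.comp hcomp
      apply this.congr
      intro m
      exact (hF m).symm
    -- decomposition of the sum
    have hsplit : ∀ u : ℝ, (∑ d ∈ pathsTo x n, (-Complex.I * (u:ℂ)) ^ turns d)
        = (if x = endpt (alt n) then ((-Complex.I * (u:ℂ))^(n-1)) else 0)
          + ∑ d ∈ (pathsTo x n).filter (fun d => ¬ turns d = n-1),
              (-Complex.I * (u:ℂ)) ^ turns d := by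
      intro u
      rw [← Finset.sum_filter_add_sum_filter_not (pathsTo x n) (fun d => turns d = n-1)]
      congr 1
      rw [P1_eq x n hn1]
      by_cases hx : x = endpt (alt n)
      · rw [if_pos hx, if_pos hx, Finset.sum_singleton, turns_alt]
      · rw [if_neg hx, if_neg hx, Finset.sum_empty]
    set K : ℕ := ((pathsTo x n).filter (fun d => ¬ turns d = n-1)).card with hK
    have hA : ∀ u : ℝ, 0 ≤ u →
        ‖if x = endpt (alt n) then ((-Complex.I * (u:ℂ))^(n-1)) else 0‖
          = c * u^(n-1) := by
      intro u hu
      by_cases hx : x = endpt (alt n) <;>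
        simp [hx, hc, map_pow, map_mul, Complex.norm_real, abs_of_nonneg hu]
    have hB : ∀ u : ℝ, 1 ≤ u →
        ‖∑ d ∈ (pathsTo x n).filter (fun d => ¬ turns d = n-1),
            (-Complex.I * (u:ℂ)) ^ turns d‖ ≤ (K:ℝ) * u^(n-2) := by
      intro u hu
      have hu0 : 0 ≤ u := le_trans zero_le_one hu
      calc ‖∑ d ∈ (pathsTo x n).filter (fun d => ¬ turns d = n-1),
              (-Complex.I * (u:ℂ)) ^ turns d‖
          ≤ ∑ d ∈ (pathsTo x n).filter (fun d => ¬ turns d = n-1),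
              ‖(-Complex.I * (u:ℂ)) ^ turns d‖ := by
            exact norm_sum_le _ _
        _ ≤ ∑ d ∈ (pathsTo x n).filter (fun d => ¬ turns d = n-1), u^(n-2) := by
            apply Finset.sum_le_sum
            intro d hd
            simp only [Finset.mem_filter] at hd
            have h1 : turns d ≤ n - 2 := by
              have := turns_le d
              omega
            rw [norm_pow, norm_mul, norm_neg, Complex.norm_I, one_mul,
              Complex.norm_real, Real.norm_eq_abs, abs_of_nonneg hu0]
            exact pow_le_pow_right₀ hu h1
        _ = (K:ℝ) * u^(n-2) := by
            rw [Finset.sum_const, nsmul_eq_mul, hK]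
    by_cases hn2 : n = 1
    · -- n = 1 : F is constant c
      have hfe : ((pathsTo x n).filter (fun d => ¬ turns d = n-1)) = ∅ := by
        rw [Finset.filter_eq_empty_iff]
        intro d _
        have := turns_le d
        omega
      have hFc : ∀ u : ℝ, F u = c := by
        intro u
        rw [hFdef]
        simp only [hsplit u, hfe, Finset.sum_empty, add_zero]
        have h0 : n - 1 = 0 := by omega
        rw [h0]
        simp only [pow_zero, div_one]
        by_cases hx : x = endpt (alt n) <;> simp [hx, hc]
      exact tendsto_const_nhds.congr (fun u => (hFc u).symm)
    · -- n ≥ 2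
      have hk1 : 1 ≤ n - 1 := by omega
      set k : ℕ := n - 1 with hkdef
      rw [← hcc]
      have hlo : Tendsto (fun u : ℝ =>
          (c^2 * u^(2*k) - 2*c*(K:ℝ)*u^(2*k-1)) / (1+u^2)^k) atTop (nhds (c^2)) := by
        have h1 := (tendsto_ratio_pow k).const_mul (c^2)
        have h2 := (tendsto_small k 1 le_rfl (by omega)).const_mul (2*c*(K:ℝ))
        have := h1.sub h2
        simp only [mul_one, mul_zero, sub_zero] at this
        apply this.congr
        intro u
        rw [← mul_div_assoc, ← mul_div_assoc, ← sub_div]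
      have hhi : Tendsto (fun u : ℝ =>
          (c^2 * u^(2*k) + 2*c*(K:ℝ)*u^(2*k-1) + (K:ℝ)^2*u^(2*k-2)) / (1+u^2)^k)
          atTop (nhds (c^2)) := by
        have h1 := (tendsto_ratio_pow k).const_mul (c^2)
        have h2 := (tendsto_small k 1 le_rfl (by omega)).const_mul (2*c*(K:ℝ))
        have h3 := (tendsto_small k 2 (by omega) (by omega)).const_mul ((K:ℝ)^2)
        have := (h1.add h2).add h3
        simp only [mul_one, mul_zero, add_zero] at this
        apply this.congr
        intro u
        rw [← mul_div_assoc, ← mul_div_assoc, ← mul_div_assoc, ← add_div, ← add_div]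
      apply tendsto_of_tendsto_of_tendsto_of_le_of_le' hlo hhi
      · -- lower bound eventually
        filter_upwards [eventually_ge_atTop (1:ℝ)] with u hu
        have hu0 : 0 ≤ u := le_trans zero_le_one hu
        have hD : (0:ℝ) < (1+u^2)^k := by positivity
        rw [hFdef]
        rw [div_le_div_iff_of_pos_right hD]
        rw [hsplit u]
        set A : ℂ := (if x = endpt (alt n) then ((-Complex.I * (u:ℂ))^k) else 0) with hAdef
        set B : ℂ := ∑ d ∈ (pathsTo x n).filter (fun d => ¬ turns d = k),
            (-Complex.I * (u:ℂ)) ^ turns d with hBdef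
        have habsA : ‖A‖ = c * u^k := hA u hu0
        have habsB : ‖B‖ ≤ (K:ℝ) * u^(n-2) := hB u hu
        have h1 : |‖A‖ - ‖B‖| ≤ ‖A + B‖ := by
          have := abs_norm_sub_norm_le A (-B)
          rwa [norm_neg, sub_neg_eq_add] at this
        rw [habsA] at h1
        have h1' := abs_le.mp h1
        have h4 : (c * u^k - ‖B‖)^2 ≤ (‖A + B‖)^2 :=
          sq_le_sq' (by linarith [h1'.1]) h1'.2
        have e1 : u^k * u^k = u^(2*k) := by rw [← pow_add]; congr 1; omega
        have e2 : u^k * u^(n-2) = u^(2*k-1) := by rw [← pow_add]; congr 1; omega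
        have h5 : 2*(c*u^k)*(‖B‖) ≤ 2*(c*u^k)*((K:ℝ)*u^(n-2)) := by
          apply mul_le_mul_of_nonneg_left habsB
          have : (0:ℝ) ≤ u^k := pow_nonneg hu0 k
          positivity
        have e1' : c^2 * (u^k * u^k) = c^2 * u^(2*k) := by rw [e1]
        have e2' : 2*(c*u^k)*((K:ℝ)*u^(n-2)) = 2*c*(K:ℝ)*u^(2*k-1) := by
          rw [← e2]; ring
        nlinarith [h4, h5, sq_nonneg (‖B‖), e1', e2']
      · -- upper bound eventually
        filter_upwards [eventually_ge_atTop (1:ℝ)] with u hu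
        have hu0 : 0 ≤ u := le_trans zero_le_one hu
        have hD : (0:ℝ) < (1+u^2)^k := by positivity
        rw [hFdef]
        rw [div_le_div_iff_of_pos_right hD]
        rw [hsplit u]
        set A : ℂ := (if x = endpt (alt n) then ((-Complex.I * (u:ℂ))^k) else 0) with hAdef
        set B : ℂ := ∑ d ∈ (pathsTo x n).filter (fun d => ¬ turns d = k),
            (-Complex.I * (u:ℂ)) ^ turns d with hBdef
        have habsA : ‖A‖ = c * u^k := hA u hu0
        have habsB : ‖B‖ ≤ (K:ℝ) * u^(n-2) := hB u hu
        have h6 : ‖A + B‖ ≤ c * u^k + (K:ℝ) * u^(n-2) := by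
          calc ‖A + B‖ ≤ ‖A‖ + ‖B‖ :=
                norm_add_le A B
            _ ≤ c * u^k + (K:ℝ) * u^(n-2) := by rw [habsA]; linarith
        have h7 : (‖A + B‖)^2 ≤ (c * u^k + (K:ℝ) * u^(n-2))^2 :=
          pow_le_pow_left₀ (norm_nonneg _) h6 2
        have e1 : u^k * u^k = u^(2*k) := by rw [← pow_add]; congr 1; omega
        have e2 : u^k * u^(n-2) = u^(2*k-1) := by rw [← pow_add]; congr 1; omega
        have e3 : u^(n-2) * u^(n-2) = u^(2*k-2) := by rw [← pow_add]; congr 1; omega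
        have e1' : c^2 * (u^k * u^k) = c^2 * u^(2*k) := by rw [e1]
        have e2' : 2*(c*u^k)*((K:ℝ)*u^(n-2)) = 2*c*(K:ℝ)*u^(2*k-1) := by
          rw [← e2]; ring
        have e3' : ((K:ℝ)*u^(n-2))*((K:ℝ)*u^(n-2)) = (K:ℝ)^2*u^(2*k-2) := by
          rw [← e3]; ring
        nlinarith [h7, e1', e2', e3']
end
end
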